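/- Let M be a Garside monoid with Garside element Δ and simple divisors D, and let G be its group of fractions. Suppose Δ is tame. Then the translation lengths of nontrivial elements of G are bounded away from zero: there exists ε > 0 such that for every g ∈ G with g ≠ 1, liminf_{n→∞} |gⁿ|_D / n ≥ ε (in particular the translation length τ(g) = lim_{n→∞} |gⁿ|_D / n, whenever it exists, is at least ε). -/

import Mathlib

namespace Garside

variable {M : Type*} [Monoid M]

/-- `a` left-divides `b`. -/
def LDvd (a b : M) : Prop := ∃ c, b = a * c

/-- `a` right-divides `b`. -/
def RDvd (a b : M) : Prop := ∃ c, b = c * a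

/-- `m` is indivisible (an atom). -/
def Indec (m : M) : Prop := m ≠ 1 ∧ ∀ a b : M, m = a * b → a = 1 ∨ b = 1

/-- The set of lengths of expressions of `m` as a product of atoms. -/
def exprLengths (m : M) : Set ℕ :=
  {n | ∃ l : List M, (∀ x ∈ l, Indec x) ∧ l.prod = m ∧ l.length = n}

/-- The norm `‖m‖`: supremum of lengths of expressions of `m` as products of atoms. -/
noncomputable def norm (m : M) : ℕ := sSup (exprLengths m)

/-- `M` is a Garside monoid with Garside element `Δ`. -/
structure IsGarside (M : Type*) [Monoid M] (Δ : M) : Prop where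
  /- atomicity: every element is a product of atoms, with bounded expression lengths -/
  expr_nonempty : ∀ m : M, (exprLengths m).Nonempty
  expr_bdd : ∀ m : M, BddAbove (exprLengths m)
  mul_left_cancel : ∀ a b c : M, a * b = a * c → b = c
  mul_right_cancel : ∀ a b c : M, b * a = c * a → b = c
  exists_lgcd : ∀ a b : M, ∃ d, LDvd d a ∧ LDvd d b ∧ ∀ e, LDvd e a → LDvd e b → LDvd e d
  exists_llcm : ∀ a b : M, ∃ l, LDvd a l ∧ LDvd b l ∧ ∀ e, LDvd a e → LDvd b e → LDvd l e
  exists_rgcd : ∀ a b : M, ∃ d, RDvd d a ∧ RDvd d b ∧ ∀ e, RDvd e a → RDvd e b → RDvd e d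
  exists_rlcm : ∀ a b : M, ∃ l, RDvd a l ∧ RDvd b l ∧ ∀ e, RDvd a e → RDvd b e → RDvd l e
  divisor_iff : ∀ x : M, LDvd x Δ ↔ RDvd x Δ
  divisors_finite : {x : M | LDvd x Δ}.Finite
  generates : Submonoid.closure {x : M | LDvd x Δ} = ⊤

/-- The set of simple divisors of the Garside element. -/
def SimpleDivs (Δ : M) : Set M := {x : M | LDvd x Δ}

/-- `G`, with an injective monoid homomorphism `ι : M →* G`, is the group of fractions
of the monoid `M`. -/
structure IsGroupOfFractions (M G : Type*) [Monoid M] [Group G] (ι : M →* G) : Prop where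
  injective : Function.Injective ι
  fraction : ∀ g : G, ∃ a b : M, g = ι a * (ι b)⁻¹

end Garside

namespace Garside

/-- Word length of `g` with respect to a generating set `S`: the least `n` such that
`g` is a product of `n` elements of `S ∪ S⁻¹`. -/
noncomputable def wordLength {G : Type*} [Group G] (S : Set G) (g : G) : ℕ :=
  sInf {n | ∃ l : List G, (∀ x ∈ l, x ∈ S ∨ x⁻¹ ∈ S) ∧ l.prod = g ∧ l.length = n}

end Garside


namespace Garside

theorem LDvd.trans {M : Type*} [Monoid M] {a b c : M} (h1 : LDvd a b) (h2 : LDvd b c) :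
    LDvd a c := by
  obtain ⟨x, rfl⟩ := h1; obtain ⟨y, rfl⟩ := h2; exact ⟨x * y, mul_assoc a x y⟩

theorem ldvd_pow_pow {M : Type*} [Monoid M] {Δ : M} {a b : ℕ} (h : a ≤ b) :
    LDvd (Δ ^ a) (Δ ^ b) :=
  ⟨Δ ^ (b - a), by rw [← pow_add, Nat.add_sub_cancel' h]⟩

section MonoidLemmas

variable {M : Type*} [Monoid M] {Δ : M}

theorem IsGarside.eq_one_of_mul_eq_one (hG : IsGarside M Δ) {a b : M} (hab : a * b = 1) :
    a = 1 := by
  by_contra ha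
  obtain ⟨na, la, hla, hpa, hlena⟩ := hG.expr_nonempty a
  obtain ⟨nb, lb, hlb, hpb, hlenb⟩ := hG.expr_nonempty b
  have hna : 1 ≤ na := by
    rcases Nat.eq_zero_or_pos na with h0 | h1
    · exfalso; apply ha
      have : la = [] := List.length_eq_zero_iff.mp (by rw [hlena, h0])
      rw [← hpa, this]; rfl
    · exact h1
  obtain ⟨K, hK⟩ := hG.expr_bdd 1
  have hmem : ∀ j : ℕ, j * (na + nb) ∈ exprLengths (1 : M) := by
    intro j
    refine ⟨(List.replicate j (la ++ lb)).flatten, ?_, ?_, ?_⟩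
    · intro x hx
      rw [List.mem_flatten] at hx
      obtain ⟨l', hl', hx⟩ := hx
      rw [List.eq_of_mem_replicate hl'] at hx
      rcases List.mem_append.mp hx with h | h
      · exact hla x h
      · exact hlb x h
    · rw [List.prod_flatten, List.map_replicate, List.prod_replicate, List.prod_append,
        hpa, hpb, hab, one_pow]
    · rw [List.length_flatten, List.map_replicate, List.sum_replicate, smul_eq_mul,
        List.length_append, hlena, hlenb]
  have h1 : (K + 1) * (na + nb) ≤ K := hK (hmem (K + 1))
  have h2 : K + 1 ≤ (K + 1) * (na + nb) := by
    calc K + 1 = (K + 1) * 1 := (mul_one _).symm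
    _ ≤ (K + 1) * (na + nb) := by apply Nat.mul_le_mul_left; omega
  omega

theorem IsGarside.eq_one_of_mul_eq_one' (hG : IsGarside M Δ) {a b : M} (hab : a * b = 1) :
    b = 1 := by
  have ha := hG.eq_one_of_mul_eq_one hab
  rw [ha, one_mul] at hab; exact hab

theorem IsGarside.norm_superadd (hG : IsGarside M Δ) (a b : M) :
    norm a + norm b ≤ norm (a * b) := by
  obtain ⟨la, hla, hpa, hlena⟩ := Nat.sSup_mem (hG.expr_nonempty a) (hG.expr_bdd a)
  obtain ⟨lb, hlb, hpb, hlenb⟩ := Nat.sSup_mem (hG.expr_nonempty b) (hG.expr_bdd b)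
  apply le_csSup (hG.expr_bdd (a * b))
  refine ⟨la ++ lb, ?_, ?_, ?_⟩
  · intro x hx; rcases List.mem_append.mp hx with h | h
    · exact hla x h
    · exact hlb x h
  · rw [List.prod_append, hpa, hpb]
  · rw [List.length_append, hlena, hlenb]; rfl

theorem IsGarside.norm_pos (hG : IsGarside M Δ) {a : M} (ha : a ≠ 1) : 1 ≤ norm a := by
  obtain ⟨n, l, hl, hp, hlen⟩ := hG.expr_nonempty a
  have hn : 1 ≤ n := by
    rcases Nat.eq_zero_or_pos n with h0 | h1
    · exfalso; apply ha
      have : l = [] := List.length_eq_zero_iff.mp (by rw [hlen, h0])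
      rw [← hp, this]; rfl
    · exact h1
  exact le_trans hn (le_csSup (hG.expr_bdd a) ⟨l, hl, hp, hlen⟩)

theorem IsGarside.norm_le_of_ldvd (hG : IsGarside M Δ) {a b : M} (h : LDvd a b) :
    norm a ≤ norm b := by
  obtain ⟨c, rfl⟩ := h
  exact le_trans (Nat.le_add_right _ _) (hG.norm_superadd a c)

theorem IsGarside.norm_le_of_rdvd (hG : IsGarside M Δ) {a b : M} (h : RDvd a b) :
    norm a ≤ norm b := by
  obtain ⟨c, rfl⟩ := h
  exact le_trans (Nat.le_add_left _ _) (hG.norm_superadd c a)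

private theorem indec_ldvd_aux (hG : IsGarside M Δ) :
    ∀ l : List M, (∀ y ∈ l, LDvd y Δ) → Indec l.prod → LDvd l.prod Δ := by
  intro l
  induction l with
  | nil => intro _ h; exact absurd rfl h.1
  | cons d t ih =>
    intro hl ha
    rw [List.prod_cons] at ha ⊢
    rcases ha.2 d t.prod rfl with h1 | h1
    · rw [h1, one_mul] at ha ⊢
      exact ih (fun y hy => hl y (List.mem_cons_of_mem _ hy)) ha
    · rw [h1, mul_one]
      exact hl d (List.mem_cons_self)

theorem IsGarside.indec_ldvd (hG : IsGarside M Δ) {a : M} (ha : Indec a) : LDvd a Δ := by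
  have hmem : a ∈ Submonoid.closure {x : M | LDvd x Δ} := by
    rw [hG.generates]; trivial
  obtain ⟨l, hl, hp⟩ := Submonoid.exists_list_of_mem_closure hmem
  rw [← hp] at ha ⊢
  exact indec_ldvd_aux hG l hl ha

theorem IsGarside.exists_simple_list (hG : IsGarside M Δ) (m : M) :
    ∃ l : List M, (∀ x ∈ l, LDvd x Δ) ∧ l.prod = m ∧ l.length ≤ norm m := by
  obtain ⟨n, l, hl, hp, hlen⟩ := hG.expr_nonempty m
  refine ⟨l, fun x hx => hG.indec_ldvd (hl x hx), hp, ?_⟩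
  exact le_csSup (hG.expr_bdd m) ⟨l, hl, hp, rfl⟩

theorem IsGarside.push_right (hG : IsGarside M Δ) (m : M) : ∃ m', m * Δ = Δ * m' := by
  have hmem : m ∈ Submonoid.closure {x : M | LDvd x Δ} := by
    rw [hG.generates]; trivial
  induction hmem using Submonoid.closure_induction with
  | mem s hs =>
    obtain ⟨t, hst⟩ := hs
    obtain ⟨t', htt'⟩ := (hG.divisor_iff t).mpr ⟨s, hst⟩
    refine ⟨t', ?_⟩
    calc s * Δ = s * (t * t') := by rw [← htt']
    _ = (s * t) * t' := (mul_assoc _ _ _).symm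
    _ = Δ * t' := by rw [← hst]
  | one => exact ⟨1, by rw [one_mul, mul_one]⟩
  | mul x y _ _ hx hy =>
    obtain ⟨x', hx'⟩ := hx
    obtain ⟨y', hy'⟩ := hy
    refine ⟨x' * y', ?_⟩
    calc x * y * Δ = x * (y * Δ) := mul_assoc _ _ _
    _ = x * (Δ * y') := by rw [hy']
    _ = (x * Δ) * y' := (mul_assoc _ _ _).symm
    _ = (Δ * x') * y' := by rw [hx']
    _ = Δ * (x' * y') := mul_assoc _ _ _

theorem IsGarside.push_left (hG : IsGarside M Δ) (m : M) : ∃ m', Δ * m = m' * Δ := by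
  have hmem : m ∈ Submonoid.closure {x : M | LDvd x Δ} := by
    rw [hG.generates]; trivial
  induction hmem using Submonoid.closure_induction with
  | mem s hs =>
    obtain ⟨u, hu⟩ := (hG.divisor_iff s).mp hs
    obtain ⟨u', hu'⟩ := (hG.divisor_iff u).mp ⟨s, hu⟩
    refine ⟨u', ?_⟩
    calc Δ * s = (u' * u) * s := by rw [← hu']
    _ = u' * (u * s) := mul_assoc _ _ _
    _ = u' * Δ := by rw [← hu]
  | one => exact ⟨1, by rw [one_mul, mul_one]⟩
  | mul x y _ _ hx hy =>
    obtain ⟨x', hx'⟩ := hx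
    obtain ⟨y', hy'⟩ := hy
    refine ⟨x' * y', ?_⟩
    calc Δ * (x * y) = (Δ * x) * y := (mul_assoc _ _ _).symm
    _ = (x' * Δ) * y := by rw [hx']
    _ = x' * (Δ * y) := mul_assoc _ _ _
    _ = x' * (y' * Δ) := by rw [hy']
    _ = (x' * y') * Δ := (mul_assoc _ _ _).symm

theorem IsGarside.push_right_pow (hG : IsGarside M Δ) (m : M) (K : ℕ) :
    ∃ m', m * Δ ^ K = Δ ^ K * m' := by
  induction K with
  | zero => exact ⟨m, by simp⟩
  | succ k ih =>
    obtain ⟨m', hm'⟩ := ih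
    obtain ⟨m'', hm''⟩ := hG.push_right m'
    refine ⟨m'', ?_⟩
    calc m * Δ ^ (k + 1) = m * (Δ ^ k * Δ) := by rw [pow_succ]
    _ = (m * Δ ^ k) * Δ := (mul_assoc _ _ _).symm
    _ = (Δ ^ k * m') * Δ := by rw [hm']
    _ = Δ ^ k * (m' * Δ) := mul_assoc _ _ _
    _ = Δ ^ k * (Δ * m'') := by rw [hm'']
    _ = (Δ ^ k * Δ) * m'' := (mul_assoc _ _ _).symm
    _ = Δ ^ (k + 1) * m'' := by rw [pow_succ]

theorem IsGarside.push_left_pow (hG : IsGarside M Δ) (m : M) (K : ℕ) :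
    ∃ m', Δ ^ K * m = m' * Δ ^ K := by
  induction K with
  | zero => exact ⟨m, by simp⟩
  | succ k ih =>
    obtain ⟨m', hm'⟩ := ih
    obtain ⟨m'', hm''⟩ := hG.push_left m'
    refine ⟨m'', ?_⟩
    calc Δ ^ (k + 1) * m = (Δ * Δ ^ k) * m := by rw [pow_succ']
    _ = Δ * (Δ ^ k * m) := mul_assoc _ _ _
    _ = Δ * (m' * Δ ^ k) := by rw [hm']
    _ = (Δ * m') * Δ ^ k := (mul_assoc _ _ _).symm
    _ = (m'' * Δ) * Δ ^ k := by rw [hm'']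
    _ = m'' * (Δ * Δ ^ k) := mul_assoc _ _ _
    _ = m'' * Δ ^ (k + 1) := by rw [pow_succ']

theorem IsGarside.ldvd_pow_of_list (hG : IsGarside M Δ) {l : List M}
    (h : ∀ x ∈ l, LDvd x Δ) : LDvd l.prod (Δ ^ l.length) := by
  induction l with
  | nil => exact ⟨1, by simp⟩
  | cons d t ih =>
    obtain ⟨r, hr⟩ := ih (fun x hx => h x (List.mem_cons_of_mem _ hx))
    obtain ⟨e, he⟩ := h d (List.mem_cons_self)
    obtain ⟨e', he'⟩ := hG.push_right_pow e t.length
    refine ⟨r * e', ?_⟩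
    show Δ ^ (t.length + 1) = (d * t.prod) * (r * e')
    calc Δ ^ (t.length + 1) = Δ * Δ ^ t.length := pow_succ' _ _
    _ = (d * e) * Δ ^ t.length := by rw [← he]
    _ = d * (e * Δ ^ t.length) := mul_assoc _ _ _
    _ = d * (Δ ^ t.length * e') := by rw [he']
    _ = d * ((t.prod * r) * e') := by rw [← hr]
    _ = d * (t.prod * (r * e')) := by rw [mul_assoc t.prod r e']
    _ = (d * t.prod) * (r * e') := (mul_assoc _ _ _).symm

theorem IsGarside.ldvd_pow_norm (hG : IsGarside M Δ) (m : M) : LDvd m (Δ ^ norm m) := by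
  obtain ⟨l, hl, hp, hlen⟩ := hG.exists_simple_list m
  exact LDvd.trans (hp ▸ hG.ldvd_pow_of_list hl) (ldvd_pow_pow hlen)

end MonoidLemmas

end Garside
namespace Garside

section Finiteness

variable {M : Type*} [Monoid M] {Δ : M}

/-- Products of at most `n` elements of `D`. -/
def prodSet (D : Set M) : ℕ → Set M
  | 0 => {1}
  | n + 1 => prodSet D n ∪ ⋃ d ∈ D, (d * ·) '' prodSet D n

theorem prodSet_finite {D : Set M} (hD : D.Finite) : ∀ n, (prodSet D n).Finite := by
  intro n
  induction n with
  | zero => exact Set.finite_singleton 1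
  | succ k ih =>
    exact ih.union (hD.biUnion (fun d _ => ih.image _))

theorem one_mem_prodSet (D : Set M) : ∀ n, (1 : M) ∈ prodSet D n := by
  intro n
  induction n with
  | zero => exact rfl
  | succ k ih => exact Or.inl ih

theorem list_prod_mem_prodSet {D : Set M} :
    ∀ l : List M, (∀ x ∈ l, x ∈ D) → ∀ n, l.length ≤ n → l.prod ∈ prodSet D n := by
  intro l
  induction l with
  | nil => intro _ n _; rw [List.prod_nil]; exact one_mem_prodSet D n
  | cons d t ih =>
    intro hl n hn
    rcases n with _ | m
    · simp at hn
    · rw [List.prod_cons]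
      refine Or.inr ?_
      refine Set.mem_biUnion (hl d (List.mem_cons_self)) ?_
      exact ⟨t.prod, ih (fun x hx => hl x (List.mem_cons_of_mem _ hx)) m
        (Nat.succ_le_succ_iff.mp hn), rfl⟩

theorem IsGarside.divisors_of_finite (hG : IsGarside M Δ) (w : M) :
    {x : M | LDvd x w}.Finite := by
  apply Set.Finite.subset (prodSet_finite hG.divisors_finite (norm w))
  intro x hx
  obtain ⟨l, hl, hp, hlen⟩ := hG.exists_simple_list x
  rw [← hp]
  exact list_prod_mem_prodSet l hl (norm w)
    (le_trans hlen (hG.norm_le_of_ldvd hx))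

end Finiteness

end Garside
namespace Garside

section GroupOrder

variable {M G : Type*} [Monoid M] [Group G]

/-- Left-divisibility order on the group of fractions. -/
def LeG (ι : M →* G) (x y : G) : Prop := ∃ m : M, y = x * ι m

/-- Right-divisibility order on the group of fractions. -/
def LeR (ι : M →* G) (x y : G) : Prop := ∃ m : M, y = ι m * x

variable {ι : M →* G} {Δ : M}

theorem leG_refl (x : G) : LeG ι x x := ⟨1, by simp⟩

theorem leG_trans {x y z : G} (h1 : LeG ι x y) (h2 : LeG ι y z) : LeG ι x z := by
  obtain ⟨m, h1⟩ := h1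
  obtain ⟨m', h2⟩ := h2
  exact ⟨m * m', by rw [map_mul, ← mul_assoc, ← h1, ← h2]⟩

theorem leG_antisymm (hG : IsGarside M Δ) (hfrac : IsGroupOfFractions M G ι)
    {x y : G} (h1 : LeG ι x y) (h2 : LeG ι y x) : x = y := by
  obtain ⟨m, h1⟩ := h1
  obtain ⟨m', h2⟩ := h2
  have h3 : x * ι (m * m') = x * 1 := by
    rw [map_mul, ← mul_assoc, ← h1, ← h2, mul_one]
  have h4 : ι (m * m') = ι 1 := by
    rw [map_one]; exact mul_left_cancel h3
  have h5 : m = 1 := hG.eq_one_of_mul_eq_one (hfrac.injective h4)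
  rw [h1, h5, map_one, mul_one]

theorem leG_mul_left {x y : G} (z : G) : LeG ι x y ↔ LeG ι (z * x) (z * y) := by
  constructor
  · rintro ⟨m, rfl⟩; exact ⟨m, (mul_assoc _ _ _).symm⟩
  · rintro ⟨m, h⟩
    exact ⟨m, by rw [mul_assoc] at h; exact mul_left_cancel h⟩

theorem psi_right (hG : IsGarside M Δ) (ι : M →* G) (m : M) (K : ℕ) :
    ∃ m', ι m * (ι Δ) ^ K = (ι Δ) ^ K * ι m' := by
  obtain ⟨m', h⟩ := hG.push_right_pow m K
  exact ⟨m', by rw [← map_pow, ← map_mul, ← map_mul, h]⟩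

theorem psi_left (hG : IsGarside M Δ) (ι : M →* G) (m : M) (K : ℕ) :
    ∃ m', (ι Δ) ^ K * ι m = ι m' * (ι Δ) ^ K := by
  obtain ⟨m', h⟩ := hG.push_left_pow m K
  exact ⟨m', by rw [← map_pow, ← map_mul, ← map_mul, h]⟩

theorem leG_mul_dG_right (hG : IsGarside M Δ) {x y : G} (K : ℕ) :
    LeG ι x y ↔ LeG ι (x * (ι Δ) ^ K) (y * (ι Δ) ^ K) := by
  constructor
  · rintro ⟨m, rfl⟩
    obtain ⟨m', hp⟩ := psi_right hG ι m K
    exact ⟨m', by rw [mul_assoc, hp, ← mul_assoc]⟩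
  · rintro ⟨m, h⟩
    obtain ⟨m', hp⟩ := psi_left hG ι m K
    refine ⟨m', ?_⟩
    have hth : y * (ι Δ) ^ K = (x * ι m') * (ι Δ) ^ K := by
      rw [h, mul_assoc x, hp, ← mul_assoc]
    exact mul_right_cancel hth

theorem leR_mul_dG_left (hG : IsGarside M Δ) {x y : G} (K : ℕ) :
    LeR ι x y ↔ LeR ι ((ι Δ) ^ K * x) ((ι Δ) ^ K * y) := by
  constructor
  · rintro ⟨m, rfl⟩
    obtain ⟨m', hp⟩ := psi_left hG ι m K
    exact ⟨m', by rw [← mul_assoc, hp, mul_assoc]⟩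
  · rintro ⟨m, h⟩
    obtain ⟨m', hp⟩ := psi_right hG ι m K
    refine ⟨m', ?_⟩
    have hth : (ι Δ) ^ K * y = (ι Δ) ^ K * (ι m' * x) := by
      rw [h, ← mul_assoc, hp, mul_assoc]
    exact mul_left_cancel hth

theorem exists_nf (hG : IsGarside M Δ) (hfrac : IsGroupOfFractions M G ι) (x : G) :
    ∃ (u : M) (K : ℕ), x * (ι Δ) ^ K = ι u := by
  obtain ⟨a, b, hab⟩ := hfrac.fraction x
  obtain ⟨c, hc⟩ := hG.ldvd_pow_norm b
  refine ⟨a * c, norm b, ?_⟩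
  rw [hab, map_mul, ← map_pow, hc, map_mul, mul_assoc, ← mul_assoc (ι b)⁻¹,
    inv_mul_cancel, one_mul]

theorem exists_nf_left (hG : IsGarside M Δ) (hfrac : IsGroupOfFractions M G ι) (x : G) :
    ∃ (u : M) (K : ℕ), (ι Δ) ^ K * x = ι u := by
  obtain ⟨u, K, h⟩ := exists_nf hG hfrac x
  obtain ⟨m', hp⟩ := psi_left hG ι u K
  refine ⟨m', K, ?_⟩
  have : (ι Δ) ^ K * x * (ι Δ) ^ K = ι m' * (ι Δ) ^ K := by
    rw [mul_assoc, h, hp]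
  exact mul_right_cancel this

/-- Least upper bound of `1` and `x` for the left-divisibility order. -/
theorem exists_join_one (hG : IsGarside M Δ) (hfrac : IsGroupOfFractions M G ι) (x : G) :
    ∃ j : G, LeG ι 1 j ∧ LeG ι x j ∧ ∀ z, LeG ι 1 z → LeG ι x z → LeG ι j z := by
  obtain ⟨u, K, hnf⟩ := exists_nf hG hfrac x
  obtain ⟨L, hL1, hL2, hL3⟩ := hG.exists_llcm u (Δ ^ K)
  refine ⟨ι L * ((ι Δ) ^ K)⁻¹, ?_, ?_, ?_⟩
  · rw [leG_mul_dG_right hG K, one_mul, mul_assoc, inv_mul_cancel, mul_one]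
    obtain ⟨r, hr⟩ := hL2
    exact ⟨r, by rw [← map_pow, ← map_mul, ← hr]⟩
  · rw [leG_mul_dG_right hG K, hnf, mul_assoc, inv_mul_cancel, mul_one]
    obtain ⟨r, hr⟩ := hL1
    exact ⟨r, by rw [← map_mul, ← hr]⟩
  · intro z hz1 hz2
    rw [leG_mul_dG_right hG K, one_mul] at hz1
    rw [leG_mul_dG_right hG K, hnf] at hz2
    obtain ⟨m, hm⟩ := hz1
    obtain ⟨m2, hm2⟩ := hz2
    have he : z * (ι Δ) ^ K = ι (Δ ^ K * m) := by rw [map_mul, map_pow, hm]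
    have he2 : ι (Δ ^ K * m) = ι (u * m2) := by rw [← he, hm2, map_mul]
    have heq : Δ ^ K * m = u * m2 := hfrac.injective he2
    obtain ⟨r, hr⟩ := hL3 (Δ ^ K * m) ⟨m2, heq.symm ▸ heq ▸ rfl⟩ ⟨m, rfl⟩
    rw [leG_mul_dG_right hG K, mul_assoc, inv_mul_cancel, mul_one, he]
    exact ⟨r, by rw [← map_mul, ← hr]⟩

/-- Least upper bound of `1` and `x` for the right-divisibility order. -/
theorem exists_rjoin_one (hG : IsGarside M Δ) (hfrac : IsGroupOfFractions M G ι) (x : G) :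
    ∃ j : G, LeR ι 1 j ∧ LeR ι x j ∧ ∀ z, LeR ι 1 z → LeR ι x z → LeR ι j z := by
  obtain ⟨u, K, hnf⟩ := exists_nf_left hG hfrac x
  obtain ⟨L, hL1, hL2, hL3⟩ := hG.exists_rlcm u (Δ ^ K)
  refine ⟨((ι Δ) ^ K)⁻¹ * ι L, ?_, ?_, ?_⟩
  · rw [leR_mul_dG_left hG K, mul_one, ← mul_assoc, mul_inv_cancel, one_mul]
    obtain ⟨r, hr⟩ := hL2
    exact ⟨r, by rw [← map_pow, ← map_mul, ← hr]⟩
  · rw [leR_mul_dG_left hG K, hnf, ← mul_assoc, mul_inv_cancel, one_mul]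
    obtain ⟨r, hr⟩ := hL1
    exact ⟨r, by rw [← map_mul, ← hr]⟩
  · intro z hz1 hz2
    rw [leR_mul_dG_left hG K, mul_one] at hz1
    rw [leR_mul_dG_left hG K, hnf] at hz2
    obtain ⟨m, hm⟩ := hz1
    obtain ⟨m2, hm2⟩ := hz2
    have he : (ι Δ) ^ K * z = ι (m * Δ ^ K) := by rw [map_mul, map_pow, hm]
    have he2 : ι (m * Δ ^ K) = ι (m2 * u) := by rw [← he, hm2, map_mul]
    have heq : m * Δ ^ K = m2 * u := hfrac.injective he2
    obtain ⟨r, hr⟩ := hL3 (m * Δ ^ K) ⟨m2, heq⟩ ⟨m, rfl⟩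
    rw [leR_mul_dG_left hG K, ← mul_assoc, mul_inv_cancel, one_mul, he]
    exact ⟨r, by rw [← map_mul, ← hr]⟩

theorem leG_iff_leR_inv {x z : G} : LeG ι z x ↔ LeR ι x⁻¹ z⁻¹ := by
  constructor
  · rintro ⟨m, rfl⟩
    exact ⟨m, by rw [mul_inv_rev, ← mul_assoc, mul_inv_cancel, one_mul]⟩
  · rintro ⟨m, h⟩
    refine ⟨m, ?_⟩
    have hx : (z * ι m)⁻¹ = x⁻¹ := by
      rw [mul_inv_rev, h, ← mul_assoc, inv_mul_cancel, one_mul]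
    exact (inv_injective hx).symm

end GroupOrder

end Garside
namespace Garside

section GroupOrder2

variable {M G : Type*} [Monoid M] [Group G] {ι : M →* G} {Δ : M}

theorem exists_meet_one (hG : IsGarside M Δ) (hfrac : IsGroupOfFractions M G ι) (x : G) :
    ∃ e : G, LeG ι e 1 ∧ LeG ι e x ∧ ∀ z, LeG ι z 1 → LeG ι z x → LeG ι z e := by
  obtain ⟨j, hj1, hj2, hj3⟩ := exists_rjoin_one hG hfrac x⁻¹
  refine ⟨j⁻¹, ?_, ?_, ?_⟩
  · rw [leG_iff_leR_inv, inv_one, inv_inv]; exact hj1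
  · rw [leG_iff_leR_inv, inv_inv]; exact hj2
  · intro z hz1 hz2
    rw [leG_iff_leR_inv, inv_one] at hz1
    rw [leG_iff_leR_inv] at hz2
    rw [leG_iff_leR_inv, inv_inv]
    exact hj3 _ hz1 hz2

theorem leG_one_dG_pow (K : ℕ) : LeG ι 1 ((ι Δ) ^ K) :=
  ⟨Δ ^ K, by rw [map_pow, one_mul]⟩

theorem leG_dG_pow_inv_one (K : ℕ) : LeG ι (((ι Δ) ^ K)⁻¹) 1 :=
  ⟨Δ ^ K, by rw [map_pow, inv_mul_cancel]⟩

theorem leG_dG_pow_mono {a b : ℕ} (h : a ≤ b) : LeG ι ((ι Δ) ^ a) ((ι Δ) ^ b) :=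
  ⟨Δ ^ (b - a), by rw [map_pow, ← pow_add, Nat.add_sub_cancel' h]⟩

theorem leG_dG_pow_inv_mono {a b : ℕ} (h : a ≤ b) :
    LeG ι (((ι Δ) ^ b)⁻¹) (((ι Δ) ^ a)⁻¹) := by
  refine ⟨Δ ^ (b - a), ?_⟩
  have hb : (ι Δ : G) ^ b = (ι Δ) ^ (b - a) * (ι Δ) ^ a := by
    rw [← pow_add, Nat.sub_add_cancel h]
  rw [map_pow, hb, mul_inv_rev, mul_assoc, inv_mul_cancel, mul_one]

theorem step_up (hG : IsGarside M Δ) {s : M} (hs : LDvd s Δ) (L : ℕ) :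
    LeG ι (ι s * (ι Δ) ^ L) ((ι Δ) ^ (L + 1)) := by
  obtain ⟨t, ht⟩ := hs
  obtain ⟨y, hy⟩ := hG.push_right_pow t L
  refine ⟨y, ?_⟩
  have hM : Δ ^ (L + 1) = s * Δ ^ L * y := by
    calc Δ ^ (L + 1) = Δ * Δ ^ L := pow_succ' _ _
    _ = (s * t) * Δ ^ L := by exact congrArg (· * Δ ^ L) ht
    _ = s * (t * Δ ^ L) := mul_assoc _ _ _
    _ = s * (Δ ^ L * y) := by rw [hy]
    _ = s * Δ ^ L * y := (mul_assoc _ _ _).symm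
  calc (ι Δ : G) ^ (L + 1) = ι (Δ ^ (L + 1)) := (map_pow _ _ _).symm
  _ = ι s * (ι Δ) ^ L * ι y := by rw [hM, map_mul, map_mul, map_pow]

theorem step_up_inv (hG : IsGarside M Δ) {s : M} (hs : LDvd s Δ) (L : ℕ) :
    LeG ι ((ι s)⁻¹ * (ι Δ) ^ L) ((ι Δ) ^ (L + 1)) := by
  obtain ⟨s', hs'⟩ := hG.push_right_pow s (L + 1)
  have hM : s * Δ ^ (L + 1) = Δ ^ L * (Δ * s') := by
    rw [hs', pow_succ, mul_assoc]
  have hg : ι s * (ι Δ) ^ (L + 1) = (ι Δ) ^ L * ι (Δ * s') := by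
    have := congrArg ι hM
    rw [map_mul, map_mul, map_pow, map_pow] at this
    rw [this, map_mul]
  refine ⟨Δ * s', ?_⟩
  rw [mul_assoc, ← hg, ← mul_assoc, inv_mul_cancel, one_mul]

theorem step_down (hG : IsGarside M Δ) {s : M} (hs : LDvd s Δ) (L : ℕ) :
    LeG ι (((ι Δ) ^ (L + 1))⁻¹) (ι s * ((ι Δ) ^ L)⁻¹) := by
  obtain ⟨w, hw⟩ := hG.push_left_pow s (L + 1)
  have hpushG : (ι Δ : G) ^ (L + 1) * ι s = ι w * (ι Δ) ^ (L + 1) := by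
    have := congrArg ι hw
    rw [map_mul, map_mul, map_pow] at this
    rw [this]
  refine ⟨w * Δ, ?_⟩
  have key : (ι Δ : G) ^ (L + 1) * (ι s * ((ι Δ) ^ L)⁻¹) = ι (w * Δ) := by
    calc (ι Δ : G) ^ (L + 1) * (ι s * ((ι Δ) ^ L)⁻¹)
        = ((ι Δ) ^ (L + 1) * ι s) * ((ι Δ) ^ L)⁻¹ := (mul_assoc _ _ _).symm
    _ = (ι w * (ι Δ) ^ (L + 1)) * ((ι Δ) ^ L)⁻¹ := by rw [hpushG]
    _ = ι w * ((ι Δ) ^ (L + 1) * ((ι Δ) ^ L)⁻¹) := mul_assoc _ _ _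
    _ = ι w * ι Δ := by rw [pow_succ', mul_inv_cancel_right]
    _ = ι (w * Δ) := (map_mul _ _ _).symm
  calc ι s * ((ι Δ) ^ L)⁻¹
      = ((ι Δ) ^ (L + 1))⁻¹ * ((ι Δ) ^ (L + 1) * (ι s * ((ι Δ) ^ L)⁻¹)) := by
        rw [← mul_assoc, inv_mul_cancel, one_mul]
  _ = ((ι Δ) ^ (L + 1))⁻¹ * ι (w * Δ) := by rw [key]

theorem step_down_inv (hG : IsGarside M Δ) {s : M} (hs : LDvd s Δ) (L : ℕ) :
    LeG ι (((ι Δ) ^ (L + 1))⁻¹) ((ι s)⁻¹ * ((ι Δ) ^ L)⁻¹) := by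
  obtain ⟨t, ht⟩ := hs
  obtain ⟨w, hw⟩ := hG.push_left_pow t (L + 1)
  have hsinv : (ι s : G)⁻¹ = ι t * (ι Δ)⁻¹ := by
    have : (ι Δ : G) = ι s * ι t := by rw [ht, map_mul]
    rw [this, mul_inv_rev, ← mul_assoc, mul_inv_cancel, one_mul]
  have hpushG : (ι Δ : G) ^ (L + 1) * ι t = ι w * (ι Δ) ^ (L + 1) := by
    have := congrArg ι hw
    rw [map_mul, map_mul, map_pow] at this
    rw [this]
  refine ⟨w, ?_⟩
  have key : (ι Δ : G) ^ (L + 1) * ((ι s)⁻¹ * ((ι Δ) ^ L)⁻¹) = ι w := by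
    calc (ι Δ : G) ^ (L + 1) * ((ι s)⁻¹ * ((ι Δ) ^ L)⁻¹)
        = (ι Δ) ^ (L + 1) * ((ι t * (ι Δ)⁻¹) * ((ι Δ) ^ L)⁻¹) := by rw [hsinv]
    _ = (ι Δ) ^ (L + 1) * (ι t * ((ι Δ)⁻¹ * ((ι Δ) ^ L)⁻¹)) := by rw [mul_assoc]
    _ = (ι Δ) ^ (L + 1) * (ι t * (((ι Δ) ^ (L + 1))⁻¹)) := by
          rw [← mul_inv_rev, ← pow_succ]
    _ = ((ι Δ) ^ (L + 1) * ι t) * (((ι Δ) ^ (L + 1))⁻¹) := (mul_assoc _ _ _).symm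
    _ = (ι w * (ι Δ) ^ (L + 1)) * (((ι Δ) ^ (L + 1))⁻¹) := by rw [hpushG]
    _ = ι w := mul_inv_cancel_right _ _
  calc (ι s : G)⁻¹ * ((ι Δ) ^ L)⁻¹
      = ((ι Δ) ^ (L + 1))⁻¹ * ((ι Δ) ^ (L + 1) * ((ι s)⁻¹ * ((ι Δ) ^ L)⁻¹)) := by
        rw [← mul_assoc, inv_mul_cancel, one_mul]
  _ = ((ι Δ) ^ (L + 1))⁻¹ * ι w := by rw [key]

theorem sandwich (hG : IsGarside M Δ) :
    ∀ l : List G, (∀ x ∈ l, x ∈ ι '' SimpleDivs Δ ∨ x⁻¹ ∈ ι '' SimpleDivs Δ) →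
      LeG ι l.prod ((ι Δ) ^ l.length) ∧ LeG ι (((ι Δ) ^ l.length)⁻¹) l.prod := by
  intro l
  induction l with
  | nil =>
    intro _
    constructor
    · rw [List.prod_nil, List.length_nil, pow_zero]; exact leG_refl 1
    · rw [List.prod_nil, List.length_nil, pow_zero, inv_one]; exact leG_refl 1
  | cons x t ih =>
    intro hl
    obtain ⟨ih1, ih2⟩ := ih (fun y hy => hl y (List.mem_cons_of_mem _ hy))
    have hx := hl x (List.mem_cons_self)
    rw [List.prod_cons, List.length_cons]
    constructor
    · refine leG_trans ((leG_mul_left x).mp ih1) ?_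
      rcases hx with ⟨s, hs, rfl⟩ | ⟨s, hs, hxs⟩
      · exact step_up hG hs t.length
      · rw [← inv_inv x, ← hxs]
        exact step_up_inv hG hs t.length
    · refine leG_trans ?_ ((leG_mul_left x).mp ih2)
      rcases hx with ⟨s, hs, rfl⟩ | ⟨s, hs, hxs⟩
      · exact step_down hG hs t.length
      · rw [← inv_inv x, ← hxs]
        exact step_down_inv hG hs t.length

end GroupOrder2

end Garside
namespace Garside

section WordLength

variable {M G : Type*} [Monoid M] [Group G] {ι : M →* G} {Δ : M}

theorem mem_wordSet_iff (S : Set G) (g : G) (n : ℕ) :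
    (n ∈ {n | ∃ l : List G, (∀ x ∈ l, x ∈ S ∨ x⁻¹ ∈ S) ∧ l.prod = g ∧ l.length = n}) ↔
      ∃ l : List G, (∀ x ∈ l, x ∈ S ∨ x⁻¹ ∈ S) ∧ l.prod = g ∧ l.length = n := Iff.rfl

theorem wordSet_nonempty (hG : IsGarside M Δ) (hfrac : IsGroupOfFractions M G ι) (g : G) :
    {n | ∃ l : List G, (∀ x ∈ l, x ∈ ι '' SimpleDivs Δ ∨ x⁻¹ ∈ ι '' SimpleDivs Δ) ∧
      l.prod = g ∧ l.length = n}.Nonempty := by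
  obtain ⟨a, b, hab⟩ := hfrac.fraction g
  obtain ⟨la, hla, hpa, _⟩ := hG.exists_simple_list a
  obtain ⟨lb, hlb, hpb, _⟩ := hG.exists_simple_list b
  refine ⟨_, la.map ι ++ ((lb.map ι).map (fun x => x⁻¹)).reverse, ?_, ?_, rfl⟩
  · intro x hx
    rcases List.mem_append.mp hx with h | h
    · obtain ⟨s, hs, rfl⟩ := List.mem_map.mp h
      exact Or.inl ⟨s, hla s hs, rfl⟩
    · rw [List.mem_reverse] at h
      obtain ⟨y, hy, rfl⟩ := List.mem_map.mp h
      obtain ⟨s, hs, rfl⟩ := List.mem_map.mp hy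
      exact Or.inr ⟨s, hlb s hs, (inv_inv _).symm⟩
  · rw [List.prod_append, ← List.prod_inv_reverse, ← map_list_prod, ← map_list_prod,
      hpa, hpb, hab]

theorem exists_min_word (hG : IsGarside M Δ) (hfrac : IsGroupOfFractions M G ι) (g : G) :
    ∃ l : List G, (∀ x ∈ l, x ∈ ι '' SimpleDivs Δ ∨ x⁻¹ ∈ ι '' SimpleDivs Δ) ∧
      l.prod = g ∧ l.length = wordLength (ι '' SimpleDivs Δ) g :=
  Nat.sInf_mem (wordSet_nonempty hG hfrac g)

theorem wordLength_le_of_list {S : Set G} {g : G} {l : List G}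
    (hl : ∀ x ∈ l, x ∈ S ∨ x⁻¹ ∈ S) (hp : l.prod = g) :
    wordLength S g ≤ l.length :=
  Nat.sInf_le ⟨l, hl, hp, rfl⟩

theorem wordLength_mul_le (hG : IsGarside M Δ) (hfrac : IsGroupOfFractions M G ι)
    (x y : G) : wordLength (ι '' SimpleDivs Δ) (x * y) ≤
      wordLength (ι '' SimpleDivs Δ) x + wordLength (ι '' SimpleDivs Δ) y := by
  obtain ⟨lx, hlx, hpx, hnx⟩ := exists_min_word hG hfrac x
  obtain ⟨ly, hly, hpy, hny⟩ := exists_min_word hG hfrac y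
  have := wordLength_le_of_list (S := ι '' SimpleDivs Δ) (g := x * y) (l := lx ++ ly)
    (fun z hz => by rcases List.mem_append.mp hz with h | h
                    exacts [hlx z h, hly z h])
    (by rw [List.prod_append, hpx, hpy])
  rwa [List.length_append, hnx, hny] at this

theorem wordLength_pow_le (hG : IsGarside M Δ) (hfrac : IsGroupOfFractions M G ι)
    (g : G) (n : ℕ) : wordLength (ι '' SimpleDivs Δ) (g ^ n) ≤
      n * wordLength (ι '' SimpleDivs Δ) g := by
  induction n with
  | zero =>
    rw [pow_zero, Nat.zero_mul]
    exact wordLength_le_of_list (l := []) (by intro x hx; cases hx) rfl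
  | succ k ih =>
    rw [pow_succ]
    calc wordLength (ι '' SimpleDivs Δ) (g ^ k * g)
        ≤ wordLength (ι '' SimpleDivs Δ) (g ^ k) + wordLength (ι '' SimpleDivs Δ) g :=
          wordLength_mul_le hG hfrac _ _
    _ ≤ k * wordLength (ι '' SimpleDivs Δ) g + wordLength (ι '' SimpleDivs Δ) g :=
          Nat.add_le_add_right ih _
    _ = (k + 1) * wordLength (ι '' SimpleDivs Δ) g := by ring

theorem leG_word_up (hG : IsGarside M Δ) (hfrac : IsGroupOfFractions M G ι) (g : G) :
    LeG ι g ((ι Δ) ^ (wordLength (ι '' SimpleDivs Δ) g)) := by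
  obtain ⟨l, hl, hp, hn⟩ := exists_min_word hG hfrac g
  have := (sandwich hG l hl).1
  rwa [hp, hn] at this

theorem leG_word_down (hG : IsGarside M Δ) (hfrac : IsGroupOfFractions M G ι) (g : G) :
    LeG ι (((ι Δ) ^ (wordLength (ι '' SimpleDivs Δ) g))⁻¹) g := by
  obtain ⟨l, hl, hp, hn⟩ := exists_min_word hG hfrac g
  have := (sandwich hG l hl).2
  rwa [hp, hn] at this

end WordLength

end Garside
namespace Garside

section Sequences

variable {M G : Type*} [Monoid M] [Group G] {ι : M →* G} {Δ : M}

theorem leG_conj_shift (g x y : G) : LeG ι (g * x) y ↔ LeG ι x (g⁻¹ * y) := by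
  constructor
  · intro h
    have := (leG_mul_left (ι := ι) g⁻¹).mp h
    rwa [inv_mul_cancel_left] at this
  · intro h
    have := (leG_mul_left (ι := ι) g).mp h
    rwa [mul_inv_cancel_left] at this

theorem leG_conj_shift' (g z w : G) : LeG ι z (g * w) ↔ LeG ι (g⁻¹ * z) w := by
  rw [leG_mul_left (ι := ι) g⁻¹, inv_mul_cancel_left]

variable (hG : IsGarside M Δ) (hfrac : IsGroupOfFractions M G ι)

/-- Join of `1` and `x`. -/
noncomputable def joinOne (x : G) : G := Classical.choose (exists_join_one hG hfrac x)

theorem joinOne_spec (x : G) :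
    LeG ι 1 (joinOne hG hfrac x) ∧ LeG ι x (joinOne hG hfrac x) ∧
      ∀ z, LeG ι 1 z → LeG ι x z → LeG ι (joinOne hG hfrac x) z :=
  Classical.choose_spec (exists_join_one hG hfrac x)

/-- Meet of `1` and `x`. -/
noncomputable def meetOne (x : G) : G := Classical.choose (exists_meet_one hG hfrac x)

theorem meetOne_spec (x : G) :
    LeG ι (meetOne hG hfrac x) 1 ∧ LeG ι (meetOne hG hfrac x) x ∧
      ∀ z, LeG ι z 1 → LeG ι z x → LeG ι z (meetOne hG hfrac x) :=
  Classical.choose_spec (exists_meet_one hG hfrac x)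

variable (g : G)

/-- Increasing sequence of joins `1 ∨ g ∨ ⋯ ∨ gⁿ`. -/
noncomputable def Jseq : ℕ → G
  | 0 => 1
  | n + 1 => joinOne hG hfrac (g * Jseq n)

/-- Decreasing sequence of meets `1 ∧ g ∧ ⋯ ∧ gⁿ`. -/
noncomputable def Iseq : ℕ → G
  | 0 => 1
  | n + 1 => meetOne hG hfrac (g * Iseq n)

theorem Jseq_succ (n : ℕ) :
    Jseq hG hfrac g (n + 1) = joinOne hG hfrac (g * Jseq hG hfrac g n) := rfl

theorem Iseq_succ (n : ℕ) :
    Iseq hG hfrac g (n + 1) = meetOne hG hfrac (g * Iseq hG hfrac g n) := rfl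

theorem Jseq_ub : ∀ n : ℕ, LeG ι 1 (Jseq hG hfrac g n) ∧
    ∀ i, i ≤ n → LeG ι (g ^ i) (Jseq hG hfrac g n) := by
  intro n
  induction n with
  | zero =>
    refine ⟨leG_refl 1, ?_⟩
    intro i hi
    rw [Nat.le_zero.mp hi, pow_zero]
    exact leG_refl 1
  | succ k ih =>
    obtain ⟨h1, h2, _⟩ := joinOne_spec hG hfrac (g * Jseq hG hfrac g k)
    rw [← Jseq_succ] at h1 h2
    refine ⟨h1, ?_⟩
    intro i hi
    rcases Nat.eq_zero_or_pos i with rfl | hip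
    · rw [pow_zero]; exact h1
    · have hgi : g ^ i = g * g ^ (i - 1) := by
        rw [← pow_succ']; congr 1; omega
      rw [hgi]
      exact leG_trans ((leG_mul_left g).mp (ih.2 (i - 1) (by omega))) h2

theorem Jseq_lub : ∀ n : ℕ, ∀ z : G, LeG ι 1 z →
    (∀ i, i ≤ n → LeG ι (g ^ i) z) → LeG ι (Jseq hG hfrac g n) z := by
  intro n
  induction n with
  | zero => intro z hz _; exact hz
  | succ k ih =>
    intro z hz h
    rw [Jseq_succ]
    refine (joinOne_spec hG hfrac (g * Jseq hG hfrac g k)).2.2 z hz ?_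
    rw [leG_conj_shift]
    refine ih (g⁻¹ * z) ?_ ?_
    · have h1 := h 1 (by omega)
      rw [pow_one] at h1
      exact (leG_conj_shift g 1 z).mp (by rwa [mul_one])
    · intro i hik
      have h1 := h (i + 1) (by omega)
      have h2 : LeG ι (g * g ^ i) z := by rwa [← pow_succ']
      exact (leG_conj_shift g _ z).mp h2

theorem Jseq_stab {n : ℕ} (h : Jseq hG hfrac g (n + 1) = Jseq hG hfrac g n) :
    ∀ m, n ≤ m → Jseq hG hfrac g m = Jseq hG hfrac g n := by
  intro m hm
  induction m with
  | zero => rw [Nat.le_zero.mp hm]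
  | succ k ih =>
    rcases Nat.lt_or_ge n (k + 1) with h1 | h1
    · have hk : n ≤ k := by omega
      rw [Jseq_succ, ih hk, ← Jseq_succ]
      exact h
    · have : k + 1 = n := by omega
      rw [this]

theorem Iseq_lb : ∀ n : ℕ, LeG ι (Iseq hG hfrac g n) 1 ∧
    ∀ i, i ≤ n → LeG ι (Iseq hG hfrac g n) (g ^ i) := by
  intro n
  induction n with
  | zero =>
    refine ⟨leG_refl 1, ?_⟩
    intro i hi
    rw [Nat.le_zero.mp hi, pow_zero]
    exact leG_refl 1
  | succ k ih =>
    obtain ⟨h1, h2, _⟩ := meetOne_spec hG hfrac (g * Iseq hG hfrac g k)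
    rw [← Iseq_succ] at h1 h2
    refine ⟨h1, ?_⟩
    intro i hi
    rcases Nat.eq_zero_or_pos i with rfl | hip
    · rw [pow_zero]; exact h1
    · have hgi : g ^ i = g * g ^ (i - 1) := by
        rw [← pow_succ']; congr 1; omega
      rw [hgi]
      exact leG_trans h2 ((leG_mul_left g).mp (ih.2 (i - 1) (by omega)))

theorem Iseq_glb : ∀ n : ℕ, ∀ z : G, LeG ι z 1 →
    (∀ i, i ≤ n → LeG ι z (g ^ i)) → LeG ι z (Iseq hG hfrac g n) := by
  intro n
  induction n with
  | zero => intro z hz _; exact hz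
  | succ k ih =>
    intro z hz h
    rw [Iseq_succ]
    refine (meetOne_spec hG hfrac (g * Iseq hG hfrac g k)).2.2 z hz ?_
    rw [leG_conj_shift']
    refine ih (g⁻¹ * z) ?_ ?_
    · have h1 := h 1 (by omega)
      rw [pow_one] at h1
      exact (leG_conj_shift' g z 1).mp (by rwa [mul_one])
    · intro i hik
      have h1 := h (i + 1) (by omega)
      have h2 : LeG ι z (g * g ^ i) := by rwa [← pow_succ']
      exact (leG_conj_shift' g z _).mp h2

end Sequences

end Garside

namespace Garside

section Sequences2

variable {M G : Type*} [Monoid M] [Group G] {ι : M →* G} {Δ : M}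
variable (hG : IsGarside M Δ) (hfrac : IsGroupOfFractions M G ι) (g : G)

theorem Iseq_stab {n : ℕ} (h : Iseq hG hfrac g (n + 1) = Iseq hG hfrac g n) :
    ∀ m, n ≤ m → Iseq hG hfrac g m = Iseq hG hfrac g n := by
  intro m hm
  induction m with
  | zero => rw [Nat.le_zero.mp hm]
  | succ k ih =>
    rcases Nat.lt_or_ge n (k + 1) with h1 | h1
    · have hk : n ≤ k := by omega
      rw [Iseq_succ, ih hk, ← Iseq_succ]
      exact h
    · have : k + 1 = n := by omega
      rw [this]

end Sequences2

end Garside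
namespace Garside

section Torsion

variable {M G : Type*} [Monoid M] [Group G] {ι : M →* G} {Δ : M}
variable (hG : IsGarside M Δ) (hfrac : IsGroupOfFractions M G ι)

include hG hfrac

theorem torsion_trivial {g : G} {k : ℕ} (hk : 1 ≤ k) (hgk : g ^ k = 1) : g = 1 := by
  rcases Nat.lt_or_ge k 2 with hk2 | hk2
  · have hk1 : k = 1 := by omega
    rw [hk1, pow_one] at hgk
    exact hgk
  · set T := g * Jseq hG hfrac g (k - 1) with hT
    have hubT : ∀ i, 1 ≤ i → i ≤ k → LeG ι (g ^ i) T := by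
      intro i h1 h2
      have hgi : g ^ i = g * g ^ (i - 1) := by
        rw [← pow_succ']; congr 1; omega
      rw [hgi, hT]
      exact (leG_mul_left g).mp ((Jseq_ub hG hfrac g (k - 1)).2 (i - 1) (by omega))
    have h1T : LeG ι 1 T := by
      have := hubT k (by omega) le_rfl
      rwa [hgk] at this
    have hJT : LeG ι (Jseq hG hfrac g (k - 1)) T := by
      refine Jseq_lub hG hfrac g (k - 1) T h1T ?_
      intro i hi
      rcases Nat.eq_zero_or_pos i with rfl | hip
      · rw [pow_zero]; exact h1T
      · exact hubT i hip (by omega)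
    have h2 : LeG ι T (g * T) := by
      rw [hT]
      exact (leG_mul_left g).mp hJT
    have h3 : LeG ι (g * T) T := by
      have hJ : LeG ι (Jseq hG hfrac g (k - 1)) (g⁻¹ * (g⁻¹ * T)) := by
        refine Jseq_lub hG hfrac g (k - 1) _ ?_ ?_
        · have h2T := hubT 2 (by omega) hk2
          have hg2 : g ^ 2 = g * (g * 1) := by rw [mul_one, pow_two]
          rw [hg2] at h2T
          exact (leG_conj_shift g _ _).mp ((leG_conj_shift g _ _).mp h2T)
        · intro i hi
          have hp2 : LeG ι (g ^ (i + 2)) T := by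
            rcases Nat.lt_or_ge (i + 2) (k + 1) with hik | hik
            · exact hubT (i + 2) (by omega) (by omega)
            · have hieq : i + 2 = k + 1 := by omega
              have : g ^ (i + 2) = g := by
                rw [hieq, pow_succ, hgk, one_mul]
              rw [this]
              have := hubT 1 le_rfl (by omega)
              rwa [pow_one] at this
          have hrw : g ^ (i + 2) = g * (g * g ^ i) := by
            rw [← pow_succ', ← pow_succ']
          rw [hrw] at hp2
          exact (leG_conj_shift g _ _).mp ((leG_conj_shift g _ _).mp hp2)
      have := (leG_mul_left g).mp ((leG_mul_left g).mp hJ)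
      rw [mul_inv_cancel_left, mul_inv_cancel_left] at this
      rw [hT]
      exact this
    have hTT : T = g * T := leG_antisymm hG hfrac h2 h3
    have : (1 : G) * T = g * T := by rw [one_mul, ← hTT]
    exact (mul_right_cancel this).symm

theorem exists_pow_eq_one {g : G} {A Z : G}
    (hA : ∀ m : ℕ, LeG ι A (g ^ m)) (hZ : ∀ m : ℕ, LeG ι (g ^ m) Z) :
    ∃ k, 1 ≤ k ∧ g ^ k = 1 := by
  obtain ⟨w, hw⟩ : LeG ι A Z := leG_trans (hA 0) (hZ 0)
  have hdvd : ∀ m : ℕ, ∃ x : M, g ^ m = A * ι x ∧ LDvd x w := by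
    intro m
    obtain ⟨x, hx⟩ := hA m
    obtain ⟨y, hy⟩ := hZ m
    refine ⟨x, hx, ⟨y, ?_⟩⟩
    have h1 : A * ι w = A * ι (x * y) := by
      rw [← hw, hy, hx, map_mul, mul_assoc]
    exact hfrac.injective (mul_left_cancel h1)
  choose x hx hxw using hdvd
  have hfin : Finite ↥{v : M | LDvd v w} := (hG.divisors_of_finite w).to_subtype
  obtain ⟨m, m', hne, heq⟩ := Finite.exists_ne_map_eq_of_infinite
    (fun m : ℕ => (⟨x m, hxw m⟩ : {v : M | LDvd v w}))
  have hxmm : x m = x m' := congrArg Subtype.val heq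
  have hgm : g ^ m = g ^ m' := by rw [hx m, hx m', hxmm]
  have key : ∀ a b : ℕ, a < b → g ^ a = g ^ b → ∃ k, 1 ≤ k ∧ g ^ k = 1 := by
    intro a b hab he
    refine ⟨b - a, by omega, ?_⟩
    have h2 : g ^ (b - a) * g ^ a = 1 * g ^ a := by
      rw [← pow_add, Nat.sub_add_cancel hab.le, one_mul, he]
    exact mul_right_cancel h2
  rcases Nat.lt_or_ge m m' with h | h
  · exact key m m' h hgm
  · exact key m' m (by omega) hgm.symm

end Torsion

end Garside
namespace Garside

theorem growth_contradiction {c₂ l₁ B n₁ : ℕ} (hsm : 2 * c₂ * l₁ + 1 ≤ n₁)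
    (f : ℕ → ℕ) (hgrow : ∀ n, n ≤ f n)
    (hbound : ∀ n, f n ≤ c₂ * ((n / n₁) * l₁ + B)) : False := by
  set N := 2 * c₂ * B + 1 with hN
  set q := N / n₁ with hq
  have h1 : N ≤ c₂ * (q * l₁ + B) := le_trans (hgrow N) (hbound N)
  have h2 : c₂ * (q * l₁ + B) = q * (c₂ * l₁) + c₂ * B := by ring
  rw [h2] at h1
  have hqn : q * n₁ ≤ N := Nat.div_mul_le_self N n₁
  have hqu : q * (2 * c₂ * l₁ + 1) ≤ q * n₁ := Nat.mul_le_mul_left q hsm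
  have h3 : q * (2 * c₂ * l₁ + 1) = 2 * (q * (c₂ * l₁)) + q := by ring
  rw [h3] at hqu
  have h4 : N = 2 * (c₂ * B) + 1 := by rw [hN]; ring
  have h5 : 2 * (q * (c₂ * l₁)) + q ≤ N := le_trans hqu hqn
  -- treat the products as atoms
  set X := q * (c₂ * l₁)
  set Y := c₂ * B
  linarith

section Master

variable {M G : Type*} [Monoid M] [Group G] {ι : M →* G} {Δ : M}

theorem small_power_eq_one (hG : IsGarside M Δ) (hfrac : IsGroupOfFractions M G ι)
    (c₂ : ℕ) (hc₂ : ∀ n : ℕ, norm (Δ ^ n) ≤ c₂ * n) (g : G) (n₁ : ℕ)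
    (hsmall : 2 * c₂ * wordLength (ι '' SimpleDivs Δ) (g ^ n₁) + 1 ≤ n₁) : g = 1 := by
  have hn₁ : 1 ≤ n₁ := by omega
  set ℓ : ℕ → ℕ := fun m => wordLength (ι '' SimpleDivs Δ) (g ^ m) with hℓdef
  set B : ℕ := n₁ * ℓ 1 with hBdef
  set Sb : ℕ → ℕ := fun m => (m / n₁) * ℓ n₁ + B with hSbdef
  have hℓS : ∀ i, ℓ i ≤ Sb i := by
    intro i
    have hdm : g ^ i = (g ^ n₁) ^ (i / n₁) * g ^ (i % n₁) := by
      rw [← pow_mul, ← pow_add, Nat.div_add_mod]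
    have h1 : ℓ i ≤ wordLength (ι '' SimpleDivs Δ) ((g ^ n₁) ^ (i / n₁)) +
        wordLength (ι '' SimpleDivs Δ) (g ^ (i % n₁)) := by
      show wordLength (ι '' SimpleDivs Δ) (g ^ i) ≤ _
      rw [hdm]
      exact wordLength_mul_le hG hfrac _ _
    have h2 : wordLength (ι '' SimpleDivs Δ) ((g ^ n₁) ^ (i / n₁)) ≤ (i / n₁) * ℓ n₁ :=
      wordLength_pow_le hG hfrac (g ^ n₁) (i / n₁)
    have h3 : wordLength (ι '' SimpleDivs Δ) (g ^ (i % n₁)) ≤ (i % n₁) * ℓ 1 := by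
      have h4 := wordLength_pow_le hG hfrac g (i % n₁)
      have h5 : wordLength (ι '' SimpleDivs Δ) g = ℓ 1 := by
        show _ = wordLength (ι '' SimpleDivs Δ) (g ^ 1)
        rw [pow_one]
      rwa [h5] at h4
    have h4 : (i % n₁) * ℓ 1 ≤ B := by
      rw [hBdef]
      exact Nat.mul_le_mul_right _ (Nat.mod_lt i (by omega)).le
    exact le_trans h1 (add_le_add h2 (le_trans h3 h4))
  have hSmono : ∀ i n, i ≤ n → Sb i ≤ Sb n := by
    intro i n hin
    apply Nat.add_le_add_right
    exact Nat.mul_le_mul_right _ (Nat.div_le_div_right hin)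
  have hup : ∀ n i, i ≤ n → LeG ι (g ^ i) ((ι Δ) ^ (Sb n)) := by
    intro n i hin
    exact leG_trans (leG_word_up hG hfrac (g ^ i))
      (leG_dG_pow_mono (le_trans (hℓS i) (hSmono i n hin)))
  have hdown : ∀ n i, i ≤ n → LeG ι (((ι Δ) ^ (Sb n))⁻¹) (g ^ i) := by
    intro n i hin
    exact leG_trans (leG_dG_pow_inv_mono (le_trans (hℓS i) (hSmono i n hin)))
      (leG_word_down hG hfrac (g ^ i))
  -- the join sequence stabilizes
  have hJstab : ∃ n, Jseq hG hfrac g (n + 1) = Jseq hG hfrac g n := by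
    by_contra hcon
    push_neg at hcon
    have hpos : ∀ n, LeG ι 1 (Jseq hG hfrac g n) := fun n => (Jseq_ub hG hfrac g n).1
    choose j hj using hpos
    have hj' : ∀ n, Jseq hG hfrac g n = ι (j n) := fun n => by rw [hj n, one_mul]
    have hgrow : ∀ n, n ≤ norm (j n) := by
      intro n
      induction n with
      | zero => exact Nat.zero_le _
      | succ k ih =>
        have hle : LeG ι (Jseq hG hfrac g k) (Jseq hG hfrac g (k + 1)) :=
          Jseq_lub hG hfrac g k _ (Jseq_ub hG hfrac g (k + 1)).1
            (fun i hik => (Jseq_ub hG hfrac g (k + 1)).2 i (by omega))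
        obtain ⟨d, hd⟩ := hle
        have hjd : j (k + 1) = j k * d := by
          apply hfrac.injective
          rw [map_mul, ← hj' (k + 1), ← hj' k]
          exact hd
        have hd1 : d ≠ 1 := by
          intro h1
          apply hcon k
          rw [hd, h1, map_one, mul_one]
        calc k + 1 ≤ norm (j k) + norm d := by
              have := hG.norm_pos hd1; omega
        _ ≤ norm (j k * d) := hG.norm_superadd _ _
        _ = norm (j (k + 1)) := by rw [← hjd]
    have hbound : ∀ n, norm (j n) ≤ c₂ * Sb n := by
      intro n
      have h1 : LeG ι (Jseq hG hfrac g n) ((ι Δ) ^ (Sb n)) :=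
        Jseq_lub hG hfrac g n _ (leG_one_dG_pow _) (fun i hin => hup n i hin)
      rw [hj' n] at h1
      obtain ⟨d, hd⟩ := h1
      have hΔ : Δ ^ (Sb n) = j n * d := by
        apply hfrac.injective
        rw [map_pow, map_mul]
        exact hd
      exact le_trans (hG.norm_le_of_ldvd ⟨d, hΔ⟩) (hc₂ _)
    exact growth_contradiction hsmall (fun n => norm (j n)) hgrow hbound
  -- the meet sequence stabilizes
  have hIstab : ∃ n, Iseq hG hfrac g (n + 1) = Iseq hG hfrac g n := by
    by_contra hcon
    push_neg at hcon
    have hneg : ∀ n, LeG ι (Iseq hG hfrac g n) 1 := fun n => (Iseq_lb hG hfrac g n).1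
    choose i0 hi0 using hneg
    have hi' : ∀ n, Iseq hG hfrac g n = (ι (i0 n))⁻¹ := fun n =>
      eq_inv_of_mul_eq_one_left (hi0 n).symm
    have hgrow : ∀ n, n ≤ norm (i0 n) := by
      intro n
      induction n with
      | zero => exact Nat.zero_le _
      | succ k ih =>
        have hle : LeG ι (Iseq hG hfrac g (k + 1)) (Iseq hG hfrac g k) :=
          Iseq_glb hG hfrac g k _ (Iseq_lb hG hfrac g (k + 1)).1
            (fun i hik => (Iseq_lb hG hfrac g (k + 1)).2 i (by omega))
        obtain ⟨d, hd⟩ := hle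
        have hd1 : d ≠ 1 := by
          intro h1
          apply hcon k
          rw [hd, h1, map_one, mul_one]
        have e1 : (ι (i0 k))⁻¹ = (ι (i0 (k + 1)))⁻¹ * ι d := by
          rw [← hi' k, ← hi' (k + 1)]
          exact hd
        have e3 := congrArg Inv.inv e1
        rw [inv_inv, mul_inv_rev, inv_inv] at e3
        have e2 : ι (i0 (k + 1)) = ι (d * i0 k) := by
          rw [map_mul, e3, mul_inv_cancel_left]
        have hgd : i0 (k + 1) = d * i0 k := hfrac.injective e2
        calc k + 1 ≤ norm d + norm (i0 k) := by
              have := hG.norm_pos hd1; omega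
        _ ≤ norm (d * i0 k) := hG.norm_superadd _ _
        _ = norm (i0 (k + 1)) := by rw [← hgd]
    have hbound : ∀ n, norm (i0 n) ≤ c₂ * Sb n := by
      intro n
      have h1 : LeG ι (((ι Δ) ^ (Sb n))⁻¹) (Iseq hG hfrac g n) :=
        Iseq_glb hG hfrac g n _ (leG_dG_pow_inv_one _) (fun i hin => hdown n i hin)
      obtain ⟨d, hd⟩ := h1
      rw [hi' n] at hd
      have e3 := congrArg Inv.inv hd
      rw [inv_inv, mul_inv_rev, inv_inv] at e3
      have e4 : ι (d * i0 n) = ι (Δ ^ Sb n) := by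
        rw [map_mul, e3, mul_inv_cancel_left, map_pow]
      have e5 : d * i0 n = Δ ^ Sb n := hfrac.injective e4
      exact le_trans (hG.norm_le_of_rdvd ⟨d, e5.symm⟩) (hc₂ _)
    exact growth_contradiction hsmall (fun n => norm (i0 n)) hgrow hbound
  -- all powers lie in a finite interval
  obtain ⟨n₀, hn₀⟩ := hJstab
  obtain ⟨m₀, hm₀⟩ := hIstab
  have hZ : ∀ m : ℕ, LeG ι (g ^ m) (Jseq hG hfrac g n₀) := by
    intro m
    rcases le_or_gt m n₀ with h | h
    · exact (Jseq_ub hG hfrac g n₀).2 m h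
    · have := (Jseq_ub hG hfrac g m).2 m le_rfl
      rwa [Jseq_stab hG hfrac g hn₀ m h.le] at this
  have hA : ∀ m : ℕ, LeG ι (Iseq hG hfrac g m₀) (g ^ m) := by
    intro m
    rcases le_or_gt m m₀ with h | h
    · exact (Iseq_lb hG hfrac g m₀).2 m h
    · have := (Iseq_lb hG hfrac g m).2 m le_rfl
      rwa [Iseq_stab hG hfrac g hm₀ m h.le] at this
  obtain ⟨k, hk1, hgk⟩ := exists_pow_eq_one hG hfrac hA hZ
  exact torsion_trivial hG hfrac hk1 hgk

end Master

end Garside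
open Garside in
/-- if `Δ` is tame, the translation lengths of nontrivial elements of `G`
are bounded away from zero: there is `ε > 0` with `liminf_n |gⁿ|_D/n ≥ ε` for all `g ≠ 1`. -/
theorem garside_tame_translation_length_bounded_below
    {M G : Type*} [Monoid M] [Group G] (ι : M →* G) (Δ : M)
    (hG : IsGarside M Δ) (hfrac : IsGroupOfFractions M G ι)
    (htame : ∃ c : ℝ, ∀ n : ℕ, (norm (Δ ^ n) : ℝ) ≤ c * n) :
    ∃ ε : ℝ, 0 < ε ∧ ∀ g : G, g ≠ 1 →
      ε ≤ Filter.liminf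
        (fun n : ℕ => (wordLength (ι '' SimpleDivs Δ) (g ^ n) : ℝ) / n) Filter.atTop := by
  obtain ⟨c, hc⟩ := htame
  set c₂ : ℕ := max 1 ⌈c⌉₊ with hc₂def
  have hc₂pos : 1 ≤ c₂ := le_max_left _ _
  have hc₂ : ∀ n : ℕ, norm (Δ ^ n) ≤ c₂ * n := by
    intro n
    have h1 : (norm (Δ ^ n) : ℝ) ≤ c * n := hc n
    have h2 : (c : ℝ) * n ≤ (c₂ : ℝ) * n := by
      apply mul_le_mul_of_nonneg_right _ (Nat.cast_nonneg n)
      calc (c : ℝ) ≤ (⌈c⌉₊ : ℝ) := Nat.le_ceil c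
      _ ≤ (c₂ : ℝ) := by exact_mod_cast le_max_right 1 ⌈c⌉₊
    exact_mod_cast le_trans h1 h2
  refine ⟨1 / (2 * (c₂ : ℝ)), by positivity, ?_⟩
  intro g hg
  have key : ∀ n : ℕ, 1 ≤ n → n ≤ 2 * c₂ * wordLength (ι '' SimpleDivs Δ) (g ^ n) := by
    intro n hn
    by_contra hcon
    push_neg at hcon
    exact hg (small_power_eq_one hG hfrac c₂ hc₂ g n (by omega))
  have hbdd : Filter.IsBoundedUnder (· ≤ ·) Filter.atTop
      (fun n : ℕ => (wordLength (ι '' SimpleDivs Δ) (g ^ n) : ℝ) / n) := by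
    refine ⟨(wordLength (ι '' SimpleDivs Δ) g : ℝ), ?_⟩
    rw [Filter.eventually_map]
    filter_upwards [Filter.eventually_ge_atTop 1] with n hn
    have h1 : wordLength (ι '' SimpleDivs Δ) (g ^ n) ≤ n * wordLength (ι '' SimpleDivs Δ) g :=
      wordLength_pow_le hG hfrac g n
    have hnpos : (0 : ℝ) < n := by exact_mod_cast hn
    rw [div_le_iff₀ hnpos]
    have h2 : (wordLength (ι '' SimpleDivs Δ) (g ^ n) : ℝ) ≤
        (n : ℝ) * (wordLength (ι '' SimpleDivs Δ) g : ℝ) := by exact_mod_cast h1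
    linarith
  apply Filter.le_liminf_of_le hbdd.isCoboundedUnder_ge
  filter_upwards [Filter.eventually_ge_atTop 1] with n hn
  have h1 := key n hn
  have hnpos : (0 : ℝ) < n := by exact_mod_cast hn
  rw [div_le_div_iff₀ (by positivity) hnpos]
  have h2 : (n : ℝ) ≤ 2 * (c₂ : ℝ) * (wordLength (ι '' SimpleDivs Δ) (g ^ n) : ℝ) := by
    exact_mod_cast h1
  linarith
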